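/- arXiv:2510.13748 — 3 statements merged into one kernel-verified Lean document; each statement's English description precedes it below -/
import Mathlib

section
/- Let n ≥ 2 and S be a positive integer with S/4 an integer ≥ 2 (so S is divisible by 4 and S ≥ 8). Set n₀ = ⌊n/2⌋ and n₁ = n - n₀. Then for each i ∈ {0,1} there exist nonnegative integers s₋₁, s₀, s₊₁ with s₊₁ ≥ S/36 and s₀ > 0 such that s₋₁·(⌊n_i/(S/2)⌋ - 1) + s₀·⌊n_i/(S/2)⌋ + s₊₁·(⌊n_i/(S/2)⌋ + 1) = n_i. -/
/-- Lemma: decomposition into latent-state sizes. For `n ≥ 2` and `S` divisible by 4 with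
`S ≥ 8`, setting `n₀ = ⌊n/2⌋`, `n₁ = n - n₀`, for each `m ∈ {n₀, n₁}` there exist
nonnegative integers `s₋₁, s₀, s₊₁` with `s₊₁ ≥ S/36`, `s₀ > 0`, and
`s₋₁·(⌊m/(S/2)⌋ - 1) + s₀·⌊m/(S/2)⌋ + s₊₁·(⌊m/(S/2)⌋ + 1) = m`. -/
theorem stmt_0 (n S : ℕ) (hn : 2 ≤ n) (hS4 : 4 ∣ S) (hS : 8 ≤ S) :
    ∀ m ∈ ({n / 2, n - n / 2} : Set ℕ),
      ∃ sm s0 sp : ℕ,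
        (S : ℝ) / 36 ≤ (sp : ℝ) ∧ 0 < s0 ∧
        (sm : ℤ) * ((m / (S / 2) : ℕ) - 1) + (s0 : ℤ) * ((m / (S / 2) : ℕ))
          + (sp : ℤ) * ((m / (S / 2) : ℕ) + 1) = (m : ℤ) := by
  intro m _
  set H := S / 2 with hHdef
  set q := m / H with hq
  set r := m % H with hr
  have hmod : H * q + r = m := Nat.div_add_mod m H
  have hmodZ : (H : ℤ) * q + r = m := by exact_mod_cast hmod
  have hrlt : r < H := Nat.mod_lt _ (by omega)
  by_cases hc : S ≤ 36 * r
  · refine ⟨0, H - r, r, ?_, by omega, ?_⟩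
    · rw [div_le_iff₀ (by norm_num : (0:ℝ) < 36)]
      exact_mod_cast (by omega : S ≤ r * 36)
    · push_cast [Nat.cast_sub hrlt.le]
      linear_combination hmodZ
  · have hle : r + 2 * (S / 36 + 1) ≤ H := by omega
    refine ⟨S / 36 + 1, H - r - 2 * (S / 36 + 1), r + (S / 36 + 1), ?_, by omega, ?_⟩
    · rw [div_le_iff₀ (by norm_num : (0:ℝ) < 36)]
      exact_mod_cast (by omega : S ≤ (r + (S / 36 + 1)) * 36)
    · have hle' : r + 2 * (S / 36 + 1) ≤ H := hle
      push_cast [Nat.cast_sub (by omega : 2 * (S / 36 + 1) ≤ H - r), Nat.cast_sub (by omega : r ≤ H)]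
      linear_combination hmodZ
end

section
/- Let μ and ν be probability measures on a finite set with μ(x)/ν(x) well-defined (ν > 0). Define kl(u, v) = u·ln(u/v) + (1-u)·ln((1-u)/(1-v)) for u, v ∈ (0,1). Then for u, v ∈ (0,1): kl(u, v) ≥ (1-u)·ln(1/(1-v)) - ln 2. -/
lemma log2_aux (x : ℝ) (hx : 0 < x) : x * (1 - 1 / (2 * x)) ≤ x * Real.log (2 * x) := by
  have h := Real.log_le_sub_one_of_pos (x := 1 / (2 * x)) (by positivity)
  have h2 : Real.log (1 / (2 * x)) = - Real.log (2 * x) := by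
    rw [one_div, Real.log_inv]
  nlinarith [h]

lemma entropy_bound (u : ℝ) (hu : u ∈ Set.Ioo (0 : ℝ) 1) :
    - Real.log 2 ≤ u * Real.log u + (1 - u) * Real.log (1 - u) := by
  obtain ⟨h0, h1⟩ := hu
  have h1u : 0 < 1 - u := by linarith
  have a := log2_aux u h0
  have b := log2_aux (1 - u) h1u
  have la : Real.log (2 * u) = Real.log 2 + Real.log u := Real.log_mul (by norm_num) (ne_of_gt h0)
  have lb : Real.log (2 * (1 - u)) = Real.log 2 + Real.log (1 - u) :=
    Real.log_mul (by norm_num) (ne_of_gt h1u)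
  rw [la] at a; rw [lb] at b
  have ha : u * (1 - 1 / (2 * u)) = u - 1/2 := by field_simp
  have hb : (1 - u) * (1 - 1 / (2 * (1 - u))) = (1 - u) - 1/2 := by field_simp
  rw [ha] at a; rw [hb] at b
  nlinarith

/-- For the binary KL divergence `kl(u,v) = u·ln(u/v) + (1-u)·ln((1-u)/(1-v))` and
`u, v ∈ (0,1)`: `kl(u,v) ≥ (1-u)·ln(1/(1-v)) - ln 2`. -/
theorem stmt_16 (u v : ℝ) (hu : u ∈ Set.Ioo (0 : ℝ) 1) (hv : v ∈ Set.Ioo (0 : ℝ) 1) :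
    (1 - u) * Real.log (1 / (1 - v)) - Real.log 2
      ≤ u * Real.log (u / v) + (1 - u) * Real.log ((1 - u) / (1 - v)) := by
  obtain ⟨hu0, hu1⟩ := hu
  obtain ⟨hv0, hv1⟩ := hv
  have h1v : 0 < 1 - v := by linarith
  have h1u : 0 < 1 - u := by linarith
  rw [Real.log_div (ne_of_gt hu0) (ne_of_gt hv0),
      Real.log_div (ne_of_gt h1u) (ne_of_gt h1v), one_div, Real.log_inv]
  have hlogv : Real.log v ≤ 0 := Real.log_nonpos (le_of_lt hv0) (le_of_lt hv1)
  have hE := entropy_bound u ⟨hu0, hu1⟩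
  nlinarith
end

section
/- Let q : X → [0,1] with Σ_{x∈X} q(x) = 1 on a finite set X of size n, let U : X → ℝ≥0, let N ≥ 1 be an integer, and let L ≥ 1. Suppose for all y: |q̂(y) - q(y)| ≤ √(q(y)·L/N) + 2L/(3N), and let H ≥ 1. Define G = {y : q(y)·N ≥ H²·L}. Then Σ_{y} |q̂(y) - q(y)|·U(y) ≤ (1/H)·Σ_y q(y)·U(y) + 2·n·‖U‖_∞·H·L/N. -/
open Finset

/-- Splitting an emission-estimation error sum: if `q` is a probability vector on a
finite set `X` of size `n`, `U ≥ 0`, `N ≥ 1`, `L ≥ 1`, `H ≥ 1`, and the estimate `q̂`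
satisfies `|q̂(y) - q(y)| ≤ √(q(y)·L/N) + 2L/(3N)` for all `y`, then
`Σ_y |q̂(y) - q(y)|·U(y) ≤ (1/H)·Σ_y q(y)·U(y) + 2·n·‖U‖_∞·H·L/N`. -/
theorem stmt_17 {X : Type*} [Fintype X] [Nonempty X] (n : ℕ)
    (hcard : Fintype.card X = n)
    (q qhat U : X → ℝ) (hq0 : ∀ x, 0 ≤ q x) (hq1 : ∀ x, q x ≤ 1)
    (hqsum : ∑ x, q x = 1) (hU : ∀ x, 0 ≤ U x)
    (N : ℕ) (hN : 1 ≤ N) (L : ℝ) (hL : 1 ≤ L) (H : ℝ) (hH : 1 ≤ H)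
    (hdev : ∀ y, |qhat y - q y| ≤ Real.sqrt (q y * L / (N : ℝ)) + 2 * L / (3 * (N : ℝ))) :
    ∑ y, |qhat y - q y| * U y
      ≤ (1 / H) * ∑ y, q y * U y
        + 2 * (n : ℝ) * (Finset.univ.sup' Finset.univ_nonempty U) * H * L / (N : ℝ) := by
  set M := Finset.univ.sup' Finset.univ_nonempty U with hMdef
  have hNpos : (0:ℝ) < N := by exact_mod_cast Nat.lt_of_lt_of_le Nat.zero_lt_one hN
  have hHpos : (0:ℝ) < H := lt_of_lt_of_le one_pos hH
  have hLpos : (0:ℝ) < L := lt_of_lt_of_le one_pos hL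
  have hMle : ∀ y, U y ≤ M := fun y => Finset.le_sup' U (mem_univ y)
  have hM0 : 0 ≤ M := le_trans (hU (Classical.arbitrary X)) (hMle _)
  have key : ∀ y, |qhat y - q y| * U y ≤ (q y / H) * U y + 2 * M * H * L / N := by
    intro y
    have h1 : |qhat y - q y| * U y
        ≤ (Real.sqrt (q y * L / N) + 2 * L / (3 * N)) * U y :=
      mul_le_mul_of_nonneg_right (hdev y) (hU y)
    refine h1.trans ?_
    by_cases hG : H ^ 2 * L ≤ q y * N
    · have hsq : Real.sqrt (q y * L / N) ≤ q y / H := by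
        rw [show q y / H = Real.sqrt ((q y / H) ^ 2) from
          (Real.sqrt_sq (div_nonneg (hq0 y) hHpos.le)).symm]
        apply Real.sqrt_le_sqrt
        rw [div_pow, div_le_div_iff₀ hNpos (by positivity)]
        calc q y * L * H ^ 2 = q y * (H ^ 2 * L) := by ring
          _ ≤ q y * (q y * N) := mul_le_mul_of_nonneg_left hG (hq0 y)
          _ = q y ^ 2 * N := by ring
      have h2 : (Real.sqrt (q y * L / N) + 2 * L / (3 * N)) * U y
          ≤ (q y / H) * U y + (2 * L / (3 * N)) * U y := by
        have := mul_le_mul_of_nonneg_right hsq (hU y)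
        nlinarith
      refine h2.trans ?_
      have h3 : (2 * L / (3 * N)) * U y ≤ 2 * M * H * L / N := by
        have hUM := hMle y
        have hUy := hU y
        have hUMH : U y ≤ M * H := by nlinarith
        rw [div_mul_eq_mul_div, div_le_div_iff₀ (by positivity) hNpos]
        nlinarith [mul_le_mul_of_nonneg_left hUMH
          (by positivity : (0:ℝ) ≤ 2 * L * N),
          mul_nonneg (mul_nonneg (mul_nonneg hM0 hHpos.le) hLpos.le) hNpos.le]
      linarith
    · push_neg at hG
      have hsq : Real.sqrt (q y * L / N) ≤ H * L / N := by
        rw [show H * L / N = Real.sqrt ((H * L / N) ^ 2) from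
          (Real.sqrt_sq (div_nonneg (mul_nonneg hHpos.le hLpos.le) hNpos.le)).symm]
        apply Real.sqrt_le_sqrt
        rw [div_pow, div_le_div_iff₀ hNpos (by positivity)]
        have h := hG.le
        nlinarith [mul_le_mul_of_nonneg_right h (by positivity : (0:ℝ) ≤ L * N)]
      have hUM := hMle y
      have hUy := hU y
      have hq : 0 ≤ q y / H * U y :=
        mul_nonneg (div_nonneg (hq0 y) hHpos.le) hUy
      have h4 : (Real.sqrt (q y * L / N) + 2 * L / (3 * N)) * U y
          ≤ (H * L / N + 2 * L / (3 * N)) * M := by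
        have hs0 : 0 ≤ Real.sqrt (q y * L / N) := Real.sqrt_nonneg _
        have hb : 0 ≤ H * L / N + 2 * L / (3 * N) :=
          add_nonneg (div_nonneg (mul_nonneg hHpos.le hLpos.le) hNpos.le)
            (div_nonneg (by linarith) (by linarith))
        have := mul_le_mul (add_le_add hsq le_rfl) hUM hUy hb
        linarith
      have h5 : (H * L / N + 2 * L / (3 * N)) * M ≤ 2 * M * H * L / N := by
        rw [div_add_div _ _ (ne_of_gt hNpos) (by positivity), div_mul_eq_mul_div,
          div_le_div_iff₀ (by positivity) hNpos]
        have h2L : 2 * L ≤ 3 * H * L := by nlinarith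
        nlinarith [mul_le_mul_of_nonneg_left h2L
          (mul_nonneg hM0 (mul_nonneg hNpos.le hNpos.le))]
      linarith
  calc ∑ y, |qhat y - q y| * U y
      ≤ ∑ y, ((q y / H) * U y + 2 * M * H * L / N) := Finset.sum_le_sum fun y _ => key y
    _ = (1 / H) * ∑ y, q y * U y + 2 * (n : ℝ) * M * H * L / N := by
        rw [Finset.sum_add_distrib, Finset.sum_const, Finset.card_univ, hcard,
          Finset.mul_sum, nsmul_eq_mul]
        congr 1
        · exact Finset.sum_congr rfl fun y _ => by ring
        · ring
end
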